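/- With η the constructed Toeplitz array and d_n=|D_n∩Per(η,Γ_n)|/|D_n|, one has 1−d_{n+1}=(1−1/|D_1|)·∏_{j=1}^{n}(1−|D_j|/|D_{j+1}|) for every n∈ℕ. -/

import Mathlib

open Pointwise MeasureTheory Filter Topology

/-- The (left) shift action of `G` on `G → A`: `(σ^g x)(h) = x(g⁻¹ h)`. -/
def shift {G A : Type*} [Group G] (g : G) (x : G → A) : G → A := fun h => x (g⁻¹ * h)

/-- `Per(x, Γ, α) = {g ∈ G : x(γ g) = α for all γ ∈ Γ}`. -/
def Per {G A : Type*} [Group G] (x : G → A) (Γ : Subgroup G) (α : A) : Set G :=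
  {g : G | ∀ γ ∈ Γ, x (γ * g) = α}

/-- `Per(x, Γ) = ⋃_α Per(x, Γ, α)`. -/
def PerAll {G A : Type*} [Group G] (x : G → A) (Γ : Subgroup G) : Set G :=
  ⋃ α : A, Per x Γ α

/-- `x` is a Toeplitz array if every `g ∈ G` is periodic for some finite index subgroup. -/
def IsToeplitz {G A : Type*} [Group G] (x : G → A) : Prop :=
  ∀ g : G, ∃ Γ : Subgroup G, Γ.FiniteIndex ∧ g ∈ PerAll x Γ

/-- `D` is a fundamental domain of `G / Γ`: every `g ∈ G` can be written uniquely as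
`g = γ u` with `γ ∈ Γ` and `u ∈ D`. -/
def IsFundDomain {G : Type*} [Group G] (Γ : Subgroup G) (D : Finset G) : Prop :=
  ∀ g : G, ∃! p : G × G, p.1 ∈ Γ ∧ p.2 ∈ D ∧ g = p.1 * p.2

/-- The symbol `α_{m+1} ∈ Σ = {1, …, r}` of the construction: the symbol `j ∈ {1, …, r}` with
`j ≡ m+1 (mod r)`, rendered in `Fin r` (the symbol `i ∈ {1, …, r}` corresponds to `i-1`). -/
def sym {r : ℕ} (hr : 1 < r) (m : ℕ) : Fin r := ⟨m % r, Nat.mod_lt m (by omega)⟩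

private lemma aux_div (a b c : ℝ) (hb : b ≠ 0) (hc : c ≠ 0) : a * (c / b) / c = a / b := by
  field_simp

private lemma aux_div2 (a b c : ℝ) (hb : b ≠ 0) : a / b * (b / c) = a / c := by
  rw [div_mul_div_comm, mul_comm b c]
  rw [mul_div_mul_right _ _ hb]

theorem statement12 {G : Type*} [Group G] [Countable G]
    {r : ℕ} (hr : 1 < r)
    -- the sequence of subgroups (with the convention `Γ 0 = G`, the data of the paper being
    -- `Γ 1 > Γ 2 > ⋯`)
    (Γ : ℕ → Subgroup G) (hΓ0 : Γ 0 = ⊤) (hanti : StrictAnti Γ)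
    (hnormal : ∀ n, (Γ n).Normal) (hfi : ∀ n, (Γ n).FiniteIndex)
    (hint : (⨅ n, Γ n) = ⊥) (hidx : ∀ n, 3 ≤ (Γ (n + 1)).relIndex (Γ n))
    -- the fundamental domains
    (D : ℕ → Finset G) (hD0 : D 0 = {1}) (hfund : ∀ n, IsFundDomain (Γ n) (D n))
    (hone : ∀ n, (1 : G) ∈ D n) (hDmono : ∀ n, D n ⊆ D (n + 1))
    (hcoverD : ∀ g : G, ∃ n, g ∈ D n)
    (hdecomp : ∀ i j, i < j →
      (D j : Set G) = ⋃ v ∈ (D j : Set G) ∩ (Γ i : Set G), v • (D i : Set G))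
    -- the sets `J m`
    (J : ℕ → Set G) (hJ0 : J 0 = {1})
    (hJ : ∀ m, 1 ≤ m → J m = (D m : Set G) \ ⋃ i < m, J i * ((Γ (i + 1) : Subgroup G) : Set G))
    -- the Toeplitz array `η`
    (η : G → Fin r)
    (hηdef : ∀ (m : ℕ), ∀ h ∈ J m, ∀ g ∈ Γ (m + 1), η (h * g) = sym hr m)
    -- the densities `d n = |D n ∩ Per(η, Γ n)| / |D n|`
    (d : ℕ → ℝ) (hd : ∀ n, d n = ((D n : Set G) ∩ PerAll η (Γ n)).ncard / (D n).card) :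
    -- `1 - d (n+1) = (1 - 1/|D 1|) ∏_{j=1}^{n} (1 - |D j| / |D (j+1)|)`
    ∀ n : ℕ, 1 - d (n + 1) =
      (1 - 1 / (D 1).card) *
        ∏ j ∈ Finset.Icc 1 n, (1 - ((D j).card : ℝ) / (D (j + 1)).card) := by
  classical
  have hΓmono : ∀ {i j : ℕ}, i ≤ j → Γ j ≤ Γ i := fun {i j} h => hanti.antitone h
  have huniq : ∀ (m : ℕ) {γ γ' u u' : G}, γ ∈ Γ m → γ' ∈ Γ m → u ∈ D m → u' ∈ D m →
      γ * u = γ' * u' → γ = γ' ∧ u = u' := by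
    intro m γ γ' u u' hγ hγ' hu hu' he
    obtain ⟨p, -, hp⟩ := hfund m (γ * u)
    have h1 : (γ, u) = p := hp (γ, u) ⟨hγ, hu, rfl⟩
    have h2 : (γ', u') = p := hp (γ', u') ⟨hγ', hu', he⟩
    have h3 := h1.trans h2.symm
    exact ⟨congrArg Prod.fst h3, congrArg Prod.snd h3⟩
  have hDΓ : ∀ m, ∀ v ∈ D m, v ∈ Γ m → v = 1 := by
    intro m v hv hvΓ
    exact (huniq m hvΓ (one_mem _) (hone m) hv (by rw [mul_one, one_mul])).1
  have hmemD : ∀ i j, i ≤ j → ∀ γ ∈ Γ i, ∀ h ∈ D i, (γ * h ∈ D j ↔ γ ∈ D j) := by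
    intro i j hij γ hγ h hh
    rcases eq_or_lt_of_le hij with rfl | hlt
    · constructor
      · intro hm
        have h1 : γ = 1 := (huniq i hγ (one_mem _) hh hm (one_mul _).symm).1
        rw [h1]; exact hone i
      · intro hγD
        rw [hDΓ i γ hγD hγ, one_mul]; exact hh
    · constructor
      · intro hm
        have hm' : (γ * h : G) ∈ (D j : Set G) := hm
        rw [hdecomp i j hlt] at hm'
        obtain ⟨v, hv, hx⟩ := Set.mem_iUnion₂.mp hm'
        obtain ⟨u, hu, he⟩ := hx
        simp only [smul_eq_mul] at he
        have := huniq i hv.2 hγ hu hh he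
        rw [← this.1]
        exact hv.1
      · intro hγD
        have hmem : (γ * h : G) ∈ (D j : Set G) := by
          rw [hdecomp i j hlt]
          refine Set.mem_iUnion₂.mpr ⟨γ, ⟨hγD, hγ⟩, ?_⟩
          have := Set.smul_mem_smul_set (a := γ) hh
          rwa [smul_eq_mul] at this
        exact hmem
  have hcosetcard : ∀ i j, i ≤ j → ∀ h ∈ D i,
      ((D j).filter (fun x => ∃ γ ∈ Γ i, x = γ * h)).card = ((D j).filter (· ∈ Γ i)).card := by
    intro i j hij h hh
    have himg : (D j).filter (fun x => ∃ γ ∈ Γ i, x = γ * h)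
        = ((D j).filter (· ∈ Γ i)).image (· * h) := by
      ext x
      simp only [Finset.mem_filter, Finset.mem_image]
      constructor
      · rintro ⟨hxD, γ, hγ, rfl⟩
        exact ⟨γ, ⟨(hmemD i j hij γ hγ h hh).mp hxD, hγ⟩, rfl⟩
      · rintro ⟨γ, ⟨hγD, hγ⟩, rfl⟩
        exact ⟨(hmemD i j hij γ hγ h hh).mpr hγD, γ, hγ, rfl⟩
    rw [himg, Finset.card_image_of_injective _ (mul_left_injective h)]
  have cardT : ∀ i j, i ≤ j → (D j).card = ((D j).filter (· ∈ Γ i)).card * (D i).card := by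
    intro i j hij
    have hde : D j = ((D j).filter (· ∈ Γ i)).biUnion (fun v => (D i).image (v * ·)) := by
      ext x
      simp only [Finset.mem_biUnion, Finset.mem_filter, Finset.mem_image]
      constructor
      · intro hx
        rcases eq_or_lt_of_le hij with rfl | hlt
        · exact ⟨1, ⟨hone i, one_mem _⟩, x, hx, one_mul x⟩
        · have hx' : (x : G) ∈ (D j : Set G) := hx
          rw [hdecomp i j hlt] at hx'
          obtain ⟨v, hv, hmem2⟩ := Set.mem_iUnion₂.mp hx'
          obtain ⟨u, hu, he⟩ := hmem2
          simp only [smul_eq_mul] at he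
          exact ⟨v, ⟨hv.1, hv.2⟩, u, hu, he⟩
      · rintro ⟨v, ⟨hvD, hvΓ⟩, u, hu, rfl⟩
        exact (hmemD i j hij v hvΓ u hu).mpr hvD
    conv_lhs => rw [hde]
    rw [Finset.card_biUnion]
    · rw [Finset.sum_congr rfl (fun v _ => Finset.card_image_of_injective (D i) (mul_right_injective v)),
        Finset.sum_const, smul_eq_mul]
    · intro v hv w hw hvw
      simp only [Finset.mem_coe, Finset.mem_filter] at hv hw
      rw [Function.onFun, Finset.disjoint_left]
      rintro a ha ha'
      simp only [Finset.mem_image] at ha ha'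
      obtain ⟨u, hu, rfl⟩ := ha
      obtain ⟨u', hu', he⟩ := ha'
      exact hvw ((huniq i hw.2 hv.2 hu' hu he).1).symm
  set K : ℕ → Set G := fun i => J i * ((Γ (i + 1) : Subgroup G) : Set G) with hKdef
  have hKmem : ∀ i x, x ∈ K i ↔ ∃ h ∈ J i, ∃ γ ∈ Γ (i + 1), x = γ * h := by
    intro i x
    simp only [hKdef, Set.mem_mul, SetLike.mem_coe]
    constructor
    · rintro ⟨h, hh, g, hg, rfl⟩
      exact ⟨h, hh, h * g * h⁻¹, (hnormal (i+1)).conj_mem g hg h, by group⟩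
    · rintro ⟨h, hh, γ, hγ, rfl⟩
      exact ⟨h, hh, h⁻¹ * γ * h, by simpa using (hnormal (i+1)).conj_mem γ hγ h⁻¹, by group⟩
  have hKsatl : ∀ i, ∀ γ ∈ Γ (i + 1), ∀ x ∈ K i, γ * x ∈ K i := by
    intro i γ hγ x hx
    obtain ⟨h, hh, γ', hγ', rfl⟩ := (hKmem i x).mp hx
    exact (hKmem i _).mpr ⟨h, hh, γ * γ', mul_mem hγ hγ', (mul_assoc _ _ _).symm⟩
  have hJ' : ∀ m, 1 ≤ m → J m = (D m : Set G) \ ⋃ i < m, K i := by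
    simp only [hKdef]; exact hJ
  have hJD : ∀ m, J m ⊆ (D m : Set G) := by
    intro m
    cases m with
    | zero => rw [hJ0, hD0]; simp
    | succ k => rw [hJ' (k+1) (by omega)]; exact Set.diff_subset
  have hJK : ∀ i m, i < m → ∀ x ∈ J m, x ∉ K i := by
    intro i m him x hx hxK
    rw [hJ' m (by omega)] at hx
    exact hx.2 (Set.mem_iUnion₂.mpr ⟨i, him, hxK⟩)
  have hKK : ∀ i m, i < m → ∀ x, x ∈ K i → x ∈ K m → False := by
    intro i m him x hxi hxm
    obtain ⟨h, hh, γ, hγ, rfl⟩ := (hKmem m _).mp hxm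
    have hmem : γ⁻¹ * (γ * h) ∈ K i :=
      hKsatl i γ⁻¹ (inv_mem (hΓmono (by omega : i + 1 ≤ m + 1) hγ)) _ hxi
    rw [inv_mul_cancel_left] at hmem
    exact hJK i m him h hh hmem
  have hηK : ∀ m, ∀ x ∈ K m, ∀ γ ∈ Γ (m + 1), η (γ * x) = sym hr m := by
    intro m x hx γ hγ
    obtain ⟨h, hh, γ', hγ', rfl⟩ := (hKmem m x).mp hx
    have hre : γ * (γ' * h) = h * (h⁻¹ * (γ * γ') * h) := by group
    rw [hre]
    exact hηdef m h hh _ (by simpa using (hnormal (m+1)).conj_mem _ (mul_mem hγ hγ') h⁻¹)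
  have hsymne : ∀ n : ℕ, sym hr (n + 1) ≠ sym hr (n + 2) := by
    intro n h
    have hv : (n + 1) % r = (n + 2) % r := congrArg Fin.val h
    have hdvd : r ∣ (n + 2) - (n + 1) := (Nat.modEq_iff_dvd' (by omega)).mp hv
    have h1 : n + 2 - (n + 1) = 1 := by omega
    rw [h1, Nat.dvd_one] at hdvd
    omega
  have hvext : ∀ n : ℕ, ∃ v, v ∈ D (n+2) ∧ v ∈ Γ (n+1) ∧ v ∉ Γ (n+2) := by
    intro n
    by_contra hcon
    push_neg at hcon
    have hle : Γ (n+1) ≤ Γ (n+2) := by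
      intro γ hγ
      obtain ⟨⟨γ', u⟩, ⟨hγ', hu, he⟩, -⟩ := hfund (n+2) γ
      have huΓ : u ∈ Γ (n+1) := by
        have hu' : u = γ'⁻¹ * γ := by rw [he]; group
        rw [hu']
        exact mul_mem (inv_mem (hΓmono (by omega : n+1 ≤ n+2) hγ')) hγ
      have huΓ2 : u ∈ Γ (n+2) := hcon u hu huΓ
      rw [he]; exact mul_mem hγ' huΓ2
    exact absurd hle (hanti (by omega : n+1 < n+2)).not_ge
  have hPer : ∀ n : ℕ, (D (n+1) : Set G) ∩ PerAll η (Γ (n+1)) = (D (n+1) : Set G) ∩ ⋃ i < n+1, K i := by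
    intro n
    ext x
    simp only [Set.mem_inter_iff]
    constructor
    · rintro ⟨hxD, hxP⟩
      refine ⟨hxD, ?_⟩
      by_contra hx
      have hxD1 : x ∈ D (n+1) := hxD
      have hxJ : x ∈ J (n+1) := by rw [hJ' (n+1) (by omega)]; exact ⟨hxD, hx⟩
      obtain ⟨v, hvD, hvΓ, hvN⟩ := hvext n
      have hvxD : v * x ∈ D (n+2) := (hmemD (n+1) (n+2) (by omega) v hvΓ x hxD1).mpr hvD
      have hvxJ : v * x ∈ J (n+2) := by
        rw [hJ' (n+2) (by omega)]
        refine ⟨hvxD, ?_⟩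
        intro hmem
        obtain ⟨i, hi, hKi⟩ := Set.mem_iUnion₂.mp hmem
        rcases Nat.lt_or_ge i (n+1) with hin | hin
        · have hmem2 : v⁻¹ * (v * x) ∈ K i :=
            hKsatl i v⁻¹ (inv_mem (hΓmono (by omega : i + 1 ≤ n + 1) hvΓ)) _ hKi
          rw [inv_mul_cancel_left] at hmem2
          exact hx (Set.mem_iUnion₂.mpr ⟨i, hin, hmem2⟩)
        · have hieq : i = n + 1 := by omega
          subst hieq
          obtain ⟨h, hh, γ, hγ, he⟩ := (hKmem (n+1) (v*x)).mp hKi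
          have huv := huniq (n+1) hvΓ (hΓmono (by omega : n+1 ≤ n+2) hγ) hxD1 (hJD (n+1) hh) he
          exact hvN (by rw [huv.1]; exact hγ)
      obtain ⟨α, hα⟩ := Set.mem_iUnion.mp hxP
      simp only [Per, Set.mem_setOf_eq] at hα
      have e1 : η x = α := by have := hα 1 (one_mem _); rwa [one_mul] at this
      have e1' : η x = sym hr (n+1) := by
        have := hηdef (n+1) x hxJ 1 (one_mem _); rwa [mul_one] at this
      have e2 : η (v * x) = α := hα v hvΓ
      have e2' : η (v * x) = sym hr (n+2) := by
        have := hηdef (n+2) (v*x) hvxJ 1 (one_mem _); rwa [mul_one] at this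
      exact hsymne n (by rw [← e1', e1, ← e2, e2'])
    · rintro ⟨hxD, hx⟩
      obtain ⟨i, hi, hKi⟩ := Set.mem_iUnion₂.mp hx
      refine ⟨hxD, Set.mem_iUnion.mpr ⟨sym hr i, ?_⟩⟩
      intro γ hγ
      exact hηK i x hKi γ (hΓmono (by omega : i + 1 ≤ n + 1) hγ)
  have cardKD : ∀ i j, i + 1 ≤ j → ((D j).filter (· ∈ K i)).card
      = ((D i).filter (· ∈ J i)).card * ((D j).filter (· ∈ Γ (i+1))).card := by
    intro i j hij
    have hbu : (D j).filter (· ∈ K i) = ((D i).filter (· ∈ J i)).biUnion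
        (fun h => (D j).filter (fun x => ∃ γ ∈ Γ (i+1), x = γ * h)) := by
      ext x
      simp only [Finset.mem_biUnion, Finset.mem_filter]
      constructor
      · rintro ⟨hxD, hxK⟩
        obtain ⟨h, hh, γ, hγ, rfl⟩ := (hKmem i _).mp hxK
        exact ⟨h, ⟨hJD i hh, hh⟩, hxD, γ, hγ, rfl⟩
      · rintro ⟨h, ⟨-, hh⟩, hxD, γ, hγ, rfl⟩
        exact ⟨hxD, (hKmem i _).mpr ⟨h, hh, γ, hγ, rfl⟩⟩
    rw [hbu, Finset.card_biUnion]
    · rw [Finset.sum_congr rfl (fun h hh => hcosetcard (i+1) j hij h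
        (hDmono i ((Finset.mem_filter.mp hh).1))), Finset.sum_const, smul_eq_mul]
    · intro h hh h' hh' hne
      rw [Function.onFun, Finset.disjoint_left]
      rintro a ha ha'
      simp only [Finset.mem_coe, Finset.mem_filter] at ha ha' hh hh'
      obtain ⟨haD, γ, hγ, rfl⟩ := ha
      obtain ⟨-, γ', hγ', he⟩ := ha'
      exact hne (huniq (i+1) hγ hγ' (hDmono i hh.1) (hDmono i hh'.1) he).2
  have cardFU : ∀ m, 1 ≤ m → ((D m).filter (· ∈ ⋃ i < m, K i)).card
      = ∑ i ∈ Finset.range m, ((D i).filter (· ∈ J i)).card * ((D m).filter (· ∈ Γ (i+1))).card := by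
    intro m hm
    have hbu : (D m).filter (· ∈ ⋃ i < m, K i)
        = (Finset.range m).biUnion (fun i => (D m).filter (· ∈ K i)) := by
      ext x
      simp only [Finset.mem_biUnion, Finset.mem_filter, Finset.mem_range, Set.mem_iUnion,
        exists_prop]
      tauto
    rw [hbu, Finset.card_biUnion]
    · exact Finset.sum_congr rfl (fun i hi => cardKD i m (Finset.mem_range.mp hi))
    · intro i hi j hj hij
      rw [Function.onFun, Finset.disjoint_left]
      rintro a ha ha'
      simp only [Finset.mem_filter] at ha ha'
      rcases Nat.lt_or_ge i j with hc | hc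
      · exact hKK i j hc a ha.2 ha'.2
      · exact hKK j i (by omega) a ha'.2 ha.2
  have hJFsdiff : ∀ m, 1 ≤ m → (D m).filter (· ∈ J m) = D m \ (D m).filter (· ∈ ⋃ i < m, K i) := by
    intro m hm
    ext x
    simp only [Finset.mem_filter, Finset.mem_sdiff, hJ' m hm, Set.mem_diff, Finset.mem_coe]
    tauto
  have cardJ : ∀ m, 1 ≤ m → ((D m).filter (· ∈ J m)).card
      = (D m).card - ((D m).filter (· ∈ ⋃ i < m, K i)).card := by
    intro m hm; rw [hJFsdiff m hm, Finset.card_sdiff_of_subset (Finset.filter_subset _ _)]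
  have hncard : ∀ n : ℕ, ((D (n+1) : Set G) ∩ PerAll η (Γ (n+1))).ncard
      = ((D (n+1)).filter (· ∈ ⋃ i < n+1, K i)).card := by
    intro n
    rw [hPer n]
    have hco : (D (n+1) : Set G) ∩ (⋃ i < n+1, K i)
        = ↑((D (n+1)).filter (· ∈ ⋃ i < n+1, K i)) := by
      ext x
      simp [Finset.mem_coe, Finset.mem_filter, Set.mem_inter_iff]
    rw [hco, Set.ncard_coe_finset]
  have hDpos : ∀ m, (0:ℝ) < (D m).card := by
    intro m
    exact_mod_cast Finset.card_pos.mpr ⟨1, hone m⟩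
  have hDne : ∀ m, ((D m).card : ℝ) ≠ 0 := fun m => ne_of_gt (hDpos m)
  have hTr : ∀ i j, i ≤ j → (((D j).filter (· ∈ Γ i)).card : ℝ) = (D j).card / (D i).card := by
    intro i j hij
    rw [eq_div_iff (hDne i)]
    exact_mod_cast (cardT i j hij).symm
  have hsumdiv : ∀ m, 1 ≤ m →
      ((∑ i ∈ Finset.range m, ((D i).filter (· ∈ J i)).card * ((D m).filter (· ∈ Γ (i+1))).card : ℕ) : ℝ) / (D m).card
      = ∑ i ∈ Finset.range m, (((D i).filter (· ∈ J i)).card : ℝ) / (D (i+1)).card := by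
    intro m hm
    push_cast
    rw [Finset.sum_div]
    refine Finset.sum_congr rfl fun i hi => ?_
    rw [hTr (i+1) m (Finset.mem_range.mp hi)]
    exact aux_div _ _ _ (hDne (i+1)) (hDne m)
  have h1md : ∀ n : ℕ, 1 - d (n+1)
      = 1 - ∑ i ∈ Finset.range (n+1), (((D i).filter (· ∈ J i)).card : ℝ) / (D (i+1)).card := by
    intro n
    rw [hd (n+1), hncard n, cardFU (n+1) (by omega), hsumdiv (n+1) (by omega)]
  have hJFcard_div : ∀ m, 1 ≤ m → (((D m).filter (· ∈ J m)).card : ℝ) / (D m).card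
      = 1 - ∑ i ∈ Finset.range m, (((D i).filter (· ∈ J i)).card : ℝ) / (D (i+1)).card := by
    intro m hm
    have h1 : (((D m).filter (· ∈ J m)).card : ℝ)
        = (D m).card - ((D m).filter (· ∈ ⋃ i < m, K i)).card := by
      rw [cardJ m hm, Nat.cast_sub (Finset.card_le_card (Finset.filter_subset _ _))]
    rw [h1, sub_div, div_self (hDne m), cardFU m hm, hsumdiv m hm]
  suffices hmain : ∀ n : ℕ,
      1 - ∑ i ∈ Finset.range (n+1), (((D i).filter (· ∈ J i)).card : ℝ) / (D (i+1)).card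
      = (1 - 1 / (D 1).card) * ∏ j ∈ Finset.Icc 1 n, (1 - ((D j).card : ℝ) / (D (j+1)).card) by
    intro n; rw [h1md n]; exact hmain n
  intro n
  induction n with
  | zero =>
    have hc0 : (((D 0).filter (· ∈ J 0)).card : ℝ) = 1 := by
      rw [hD0, hJ0]
      norm_num
      rw [Finset.filter_eq_self.mpr (by simp), Finset.card_singleton]
    rw [Finset.sum_range_one, hc0, Finset.Icc_eq_empty (by omega), Finset.prod_empty, mul_one]
  | succ k ih =>
    have hstep : (((D (k+1)).filter (· ∈ J (k+1))).card : ℝ) / (D (k+2)).card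
        = (1 - ∑ i ∈ Finset.range (k+1), (((D i).filter (· ∈ J i)).card : ℝ) / (D (i+1)).card)
          * ((D (k+1)).card / (D (k+2)).card) := by
      rw [← hJFcard_div (k+1) (by omega), aux_div2 _ _ _ (hDne (k+1))]
    rw [Finset.sum_range_succ, Finset.prod_Icc_succ_top (by omega : 1 ≤ k+1), ← mul_assoc,
      ← ih, hstep]
    ring
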